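/- Uniform bound on the hard-edge Ginibre one-point function (instance of Corollary 2.5): there exists a constant C > 0 such that for all integers n ≥ 1 and all ζ ∈ ℂ with |ζ| ≤ 1, Σ_{j=0}^{n−1} |ζ|^{2j} e^{−n|ζ|²} / c_{j,n} ≤ C n. -/

import Mathlib

open MeasureTheory Real

/-- The Lebesgue area measure on `ℂ` divided by `π`, so the unit disk has measure 1. -/
noncomputable def dA : Measure ℂ := (ENNReal.ofReal Real.pi)⁻¹ • (volume : Measure ℂ)

/-- `c_{j,n} = ∫_{|w| ≤ 1} |w|^{2j} e^{-n|w|²} dA(w)`. -/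
noncomputable def cJN (j n : ℕ) : ℝ :=
  ∫ w in {w : ℂ | ‖w‖ ≤ 1}, ‖w‖ ^ (2 * j) * Real.exp (-(n : ℝ) * ‖w‖ ^ 2) ∂dA

open Finset

lemma fact_ineq (n m : ℕ) (h : m + 1 ≤ n) :
    (n + m).factorial ≤ n ^ (2 * m + 1) * (n - 1 - m).factorial := by
  induction m with
  | zero =>
    simp only [Nat.add_zero, Nat.sub_zero, pow_one]
    obtain ⟨k, rfl⟩ := Nat.exists_eq_add_of_le h
    simp [Nat.factorial_succ, Nat.add_comm]
  | succ m ih =>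
    have hm : m + 1 ≤ n := by omega
    have ih' := ih hm
    have h1 : n - 1 - m = (n - 1 - (m + 1)) + 1 := by omega
    have key : (n + m + 1) * (n - 1 - m) ≤ n ^ 2 := by
      obtain ⟨a, ha⟩ : ∃ a, n = a + (m + 2) := ⟨n - (m + 2), by omega⟩
      subst ha
      have e1 : a + (m + 2) - 1 - m = a + 1 := by omega
      rw [e1]; nlinarith
    have h2 : (n - 1 - m).factorial = (n - 1 - m) * (n - 1 - (m + 1)).factorial := by
      rw [h1, Nat.factorial_succ, ← h1]
    calc (n + (m + 1)).factorial = (n + m + 1) * (n + m).factorial := by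
          rw [← Nat.add_assoc, Nat.factorial_succ]
      _ ≤ (n + m + 1) * (n ^ (2 * m + 1) * (n - 1 - m).factorial) :=
          Nat.mul_le_mul_left _ ih'
      _ = ((n + m + 1) * (n - 1 - m)) * (n ^ (2 * m + 1) * (n - 1 - (m + 1)).factorial) := by
          rw [h2]; ring
      _ ≤ n ^ 2 * (n ^ (2 * m + 1) * (n - 1 - (m + 1)).factorial) :=
          Nat.mul_le_mul_right _ key
      _ = n ^ (2 * (m + 1) + 1) * (n - 1 - (m + 1)).factorial := by ring

lemma poisson_half (n : ℕ) (hn : 1 ≤ n) :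
    ∑ i ∈ range n, (n : ℝ) ^ i / (Nat.factorial i) ≤ Real.exp n / 2 := by
  set S := ∑ i ∈ range n, (n : ℝ) ^ i / (Nat.factorial i) with hS
  have hST : S ≤ ∑ m ∈ range n, (n : ℝ) ^ (n + m) / (Nat.factorial (n + m)) := by
    rw [hS, ← Finset.sum_range_reflect (fun i => (n : ℝ) ^ i / (Nat.factorial i)) n]
    apply Finset.sum_le_sum
    intro m hm
    have hmn : m + 1 ≤ n := Finset.mem_range.1 hm
    have hfact := fact_ineq n m hmn
    have hpos1 : (0 : ℝ) < Nat.factorial (n - 1 - m) := by positivity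
    have hpos2 : (0 : ℝ) < Nat.factorial (n + m) := by positivity
    rw [div_le_div_iff₀ hpos1 hpos2]
    have hexp : n + m = (n - 1 - m) + (2 * m + 1) := by omega
    calc (n : ℝ) ^ (n - 1 - m) * (Nat.factorial (n + m))
        ≤ (n : ℝ) ^ (n - 1 - m) * ((n : ℝ) ^ (2 * m + 1) * (Nat.factorial (n - 1 - m))) := by
          apply mul_le_mul_of_nonneg_left _ (by positivity)
          rw [← Nat.cast_pow, ← Nat.cast_mul]
          exact_mod_cast Nat.cast_le.2 hfact
      _ = (n : ℝ) ^ (n + m) * (Nat.factorial (n - 1 - m)) := by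
          rw [hexp, pow_add]; ring
  have htot : S + ∑ m ∈ range n, (n : ℝ) ^ (n + m) / (Nat.factorial (n + m)) ≤ Real.exp n := by
    have h1 : ∑ m ∈ range n, (n : ℝ) ^ (n + m) / (Nat.factorial (n + m)) =
        ∑ i ∈ Finset.Ico n (2 * n), (n : ℝ) ^ i / (Nat.factorial i) := by
      rw [Finset.sum_Ico_eq_sum_range]
      have h2 : 2 * n - n = n := by omega
      rw [h2]
    rw [h1, hS, Finset.sum_range_add_sum_Ico _ (by omega : n ≤ 2 * n)]
    exact Real.sum_le_exp_of_nonneg (by positivity) _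
  linarith

lemma partial_sum_hasDerivAt (j : ℕ) (x : ℝ) :
    HasDerivAt (fun y : ℝ => ∑ i ∈ range (j + 1), y ^ i / (Nat.factorial i))
      (∑ i ∈ range j, x ^ i / (Nat.factorial i)) x := by
  have h : HasDerivAt (fun y : ℝ => ∑ i ∈ range (j + 1), y ^ i / (Nat.factorial i))
      (∑ i ∈ range (j + 1), (i : ℝ) * x ^ (i - 1) / (Nat.factorial i)) x := by
    apply HasDerivAt.fun_sum
    intro i _
    exact (hasDerivAt_pow i x).div_const _
  convert h using 1
  rw [Finset.sum_range_succ']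
  simp only [Nat.cast_zero, zero_mul, Nat.factorial_zero, Nat.cast_one, zero_div, add_zero]
  apply Finset.sum_congr rfl
  intro i _
  rw [Nat.factorial_succ, Nat.add_sub_cancel]
  push_cast
  have : (Nat.factorial i : ℝ) ≠ 0 := by positivity
  field_simp

lemma incomplete_gamma (j : ℕ) (x : ℝ) :
    ∫ s in (0:ℝ)..x, s ^ j * Real.exp (-s) =
      (Nat.factorial j : ℝ) *
        (1 - Real.exp (-x) * ∑ i ∈ range (j + 1), x ^ i / (Nat.factorial i)) := by
  have hderiv : ∀ s ∈ Set.uIcc (0:ℝ) x,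
      HasDerivAt (fun y : ℝ => -((Nat.factorial j : ℝ) *
          (Real.exp (-y) * ∑ i ∈ range (j + 1), y ^ i / (Nat.factorial i))))
        (s ^ j * Real.exp (-s)) s := by
    intro s _
    have h1 : HasDerivAt (fun y : ℝ => Real.exp (-y)) (-Real.exp (-s)) s := by
      exact ((Real.hasDerivAt_exp (-s)).comp s (hasDerivAt_neg s)).congr_deriv (by ring)
    have h2 := partial_sum_hasDerivAt j s
    have h3 := (h1.fun_mul h2).const_mul ((Nat.factorial j : ℝ))
    have h4 := h3.fun_neg
    refine h4.congr_deriv ?_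
    rw [Finset.sum_range_succ]
    have : (Nat.factorial j : ℝ) ≠ 0 := by positivity
    field_simp
    ring
  have hcont : IntervalIntegrable (fun s : ℝ => s ^ j * Real.exp (-s)) volume 0 x :=
    (Continuous.mul (continuous_pow j) (Real.continuous_exp.comp continuous_neg)).intervalIntegrable _ _
  have := intervalIntegral.integral_eq_sub_of_hasDerivAt hderiv hcont
  have hz : ∑ i ∈ range (j + 1), (0:ℝ) ^ i / (Nat.factorial i) = 1 := by
    rw [Finset.sum_range_succ']; simp
  rw [this, hz]
  simp only [neg_zero, Real.exp_zero, one_mul, mul_one]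
  ring

lemma cJN_eq (j n : ℕ) :
    cJN j n = ∫ t in (0:ℝ)..1, t ^ j * Real.exp (-(n:ℝ) * t) := by
  have hS : MeasurableSet {w : ℂ | ‖w‖ ≤ 1} := by
    have : {w : ℂ | ‖w‖ ≤ 1} = Metric.closedBall 0 1 := by
      ext w; simp [Metric.mem_closedBall, dist_zero_right]
    rw [this]; exact measurableSet_closedBall
  set f : ℝ → ℝ := fun r => r ^ (2 * j) * Real.exp (-(n:ℝ) * r ^ 2) with hf
  set g : ℝ → ℝ := (Set.Iic (1:ℝ)).indicator f with hg
  have step1 : cJN j n = π⁻¹ * ∫ w : ℂ, g ‖w‖ := by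
    rw [cJN, dA, Measure.restrict_smul, integral_smul_measure]
    congr 1
    · simp [ENNReal.toReal_inv, Real.pi_pos.le]
    rw [← MeasureTheory.integral_indicator hS]
    apply integral_congr_ae
    apply Filter.Eventually.of_forall
    intro w
    by_cases h : ‖w‖ ≤ 1
    · simp only [hg]
      rw [Set.indicator_of_mem (show w ∈ {w : ℂ | ‖w‖ ≤ 1} from h),
        Set.indicator_of_mem (show ‖w‖ ∈ Set.Iic (1:ℝ) from h)]
    · simp only [hg]
      rw [Set.indicator_of_notMem (show w ∉ {w : ℂ | ‖w‖ ≤ 1} from h),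
        Set.indicator_of_notMem (show ‖w‖ ∉ Set.Iic (1:ℝ) from h)]
  have step2 : ∫ w : ℂ, g ‖w‖ =
      2 * (π * ∫ y in Set.Ioi (0:ℝ), y * g y) := by
    rw [integral_fun_norm_addHaar (volume : Measure ℂ) g]
    have hd : Module.finrank ℝ ℂ = 2 := Complex.finrank_real_complex
    rw [hd]
    have hb : volume.real (Metric.ball (0:ℂ) 1) = π := by
      rw [measureReal_def, Complex.volume_ball]
      simp [NNReal.coe_real_pi]
    rw [hb]
    simp only [smul_eq_mul, nsmul_eq_mul, Nat.cast_ofNat]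
    norm_num
  have step3 : ∫ y in Set.Ioi (0:ℝ), y * g y = ∫ y in (0:ℝ)..1, y * f y := by
    have h1 : (fun y : ℝ => y * g y) = (Set.Iic (1:ℝ)).indicator (fun y => y * f y) := by
      funext y
      rw [hg]
      simp [Set.indicator_apply, mul_ite]
    rw [h1, setIntegral_indicator measurableSet_Iic, Set.Ioi_inter_Iic,
      intervalIntegral.integral_of_le zero_le_one]
  have step4 : 2 * ∫ y in (0:ℝ)..1, y * f y = ∫ t in (0:ℝ)..1, t ^ j * Real.exp (-(n:ℝ) * t) := by
    have hderiv : ∀ x ∈ Set.uIcc (0:ℝ) 1, HasDerivAt (fun r : ℝ => r ^ 2) (2 * x) x := by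
      intro x _
      simpa using hasDerivAt_pow 2 x
    have hcg : Continuous (fun t : ℝ => t ^ j * Real.exp (-(n:ℝ) * t)) :=
      (continuous_pow j).mul ((Real.continuous_exp).comp (continuous_const.mul continuous_id))
    have := intervalIntegral.integral_comp_smul_deriv hderiv
      ((continuous_const.mul continuous_id).continuousOn) hcg
    simp only [Function.comp, smul_eq_mul] at this
    norm_num at this
    calc 2 * ∫ y in (0:ℝ)..1, y * f y
        = ∫ x in (0:ℝ)..1, 2 * x * ((x ^ 2) ^ j * Real.exp (-((n:ℝ) * x ^ 2))) := by
          rw [← intervalIntegral.integral_const_mul]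
          apply intervalIntegral.integral_congr
          intro x _
          simp only [hf, pow_mul]
          ring_nf
      _ = ∫ x in (0:ℝ)..1, x ^ j * Real.exp (-((n:ℝ) * x)) := this
      _ = ∫ t in (0:ℝ)..1, t ^ j * Real.exp (-(n:ℝ) * t) := by
          apply intervalIntegral.integral_congr
          intro x _
          ring_nf
  rw [step1, step2, step3, ← step4]
  field_simp

lemma cJN_ge (j n : ℕ) (hn : 1 ≤ n) (hj : j < n) :
    (Nat.factorial j : ℝ) / (2 * (n:ℝ) ^ (j + 1)) ≤ cJN j n := by
  rw [cJN_eq]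
  have hn0 : (n:ℝ) ≠ 0 := by positivity
  have hsub : ∫ t in (0:ℝ)..1, t ^ j * Real.exp (-(n:ℝ) * t)
      = ((n:ℝ) ^ (j + 1))⁻¹ * ∫ s in (0:ℝ)..(n:ℝ), s ^ j * Real.exp (-s) := by
    have h1 : ∀ t ∈ Set.uIcc (0:ℝ) 1, t ^ j * Real.exp (-(n:ℝ) * t)
        = ((n:ℝ) ^ j)⁻¹ * (((n:ℝ) * t) ^ j * Real.exp (-((n:ℝ) * t))) := by
      intro t _; rw [mul_pow]; field_simp
    rw [intervalIntegral.integral_congr h1, intervalIntegral.integral_const_mul,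
      intervalIntegral.integral_comp_mul_left (fun s => s ^ j * Real.exp (-s)) hn0]
    simp only [smul_eq_mul, mul_zero, mul_one]
    rw [pow_succ]
    field_simp
  rw [hsub, incomplete_gamma j n]
  have hhalf : Real.exp (-(n:ℝ)) * ∑ i ∈ range (j + 1), (n:ℝ) ^ i / (Nat.factorial i) ≤ 1/2 := by
    have h1 : ∑ i ∈ range (j + 1), (n:ℝ) ^ i / (Nat.factorial i)
        ≤ ∑ i ∈ range n, (n:ℝ) ^ i / (Nat.factorial i) :=
      Finset.sum_le_sum_of_subset_of_nonneg (Finset.range_subset_range.2 hj)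
        (fun i _ _ => by positivity)
    have h2 := poisson_half n hn
    calc Real.exp (-(n:ℝ)) * ∑ i ∈ range (j + 1), (n:ℝ) ^ i / (Nat.factorial i)
        ≤ Real.exp (-(n:ℝ)) * (Real.exp n / 2) :=
          mul_le_mul_of_nonneg_left (le_trans h1 h2) (Real.exp_pos _).le
      _ = 1/2 := by rw [Real.exp_neg]; field_simp
  have h3 : (1:ℝ)/2 ≤ 1 - Real.exp (-(n:ℝ)) * ∑ i ∈ range (j + 1), (n:ℝ) ^ i / (Nat.factorial i) := by
    linarith
  have hfp : (0:ℝ) < (Nat.factorial j : ℝ) := by positivity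
  have hnp : (0:ℝ) < ((n:ℝ) ^ (j + 1))⁻¹ := by positivity
  calc (Nat.factorial j : ℝ) / (2 * (n:ℝ) ^ (j + 1))
      = ((n:ℝ) ^ (j + 1))⁻¹ * ((Nat.factorial j : ℝ) * (1/2)) := by
        rw [div_eq_mul_inv, mul_inv, mul_comm ((2:ℝ))⁻¹]
        ring
    _ ≤ ((n:ℝ) ^ (j + 1))⁻¹ * ((Nat.factorial j : ℝ) *
        (1 - Real.exp (-(n:ℝ)) * ∑ i ∈ range (j + 1), (n:ℝ) ^ i / (Nat.factorial i))) := by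
        apply mul_le_mul_of_nonneg_left _ hnp.le
        exact mul_le_mul_of_nonneg_left h3 hfp.le

/-- Uniform bound on the hard-edge Ginibre one-point function: there is `C > 0` with
`Σ_{j=0}^{n−1} |ζ|^{2j} e^{−n|ζ|²}/c_{j,n} ≤ C n` for all `n ≥ 1` and `|ζ| ≤ 1`. -/
theorem hard_edge_one_point_bound :
    ∃ C > (0 : ℝ), ∀ n : ℕ, 1 ≤ n → ∀ ζ : ℂ, ‖ζ‖ ≤ 1 →
      ∑ j ∈ Finset.range n, ‖ζ‖ ^ (2 * j) * Real.exp (-(n : ℝ) * ‖ζ‖ ^ 2) / cJN j n ≤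
        C * n := by
  refine ⟨2, by norm_num, fun n hn ζ hζ => ?_⟩
  set x : ℝ := (n : ℝ) * ‖ζ‖ ^ 2 with hx
  have hx0 : 0 ≤ x := by positivity
  have key : ∀ j ∈ range n,
      ‖ζ‖ ^ (2 * j) * Real.exp (-(n : ℝ) * ‖ζ‖ ^ 2) / cJN j n ≤
        2 * (n : ℝ) * (x ^ j / (Nat.factorial j)) * Real.exp (-x) := by
    intro j hj
    have hj' : j < n := Finset.mem_range.1 hj
    have hc := cJN_ge j n hn hj'
    have hcpos : (0:ℝ) < (Nat.factorial j : ℝ) / (2 * (n:ℝ) ^ (j + 1)) := by positivity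
    have ha : (0:ℝ) ≤ ‖ζ‖ ^ (2 * j) * Real.exp (-(n : ℝ) * ‖ζ‖ ^ 2) := by positivity
    calc ‖ζ‖ ^ (2 * j) * Real.exp (-(n : ℝ) * ‖ζ‖ ^ 2) / cJN j n
        ≤ ‖ζ‖ ^ (2 * j) * Real.exp (-(n : ℝ) * ‖ζ‖ ^ 2) /
            ((Nat.factorial j : ℝ) / (2 * (n:ℝ) ^ (j + 1))) := by
          rw [div_eq_mul_inv, div_eq_mul_inv]
          exact mul_le_mul_of_nonneg_left (inv_anti₀ hcpos hc) ha
      _ = 2 * (n : ℝ) * (x ^ j / (Nat.factorial j)) * Real.exp (-x) := by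
          have hxj : x ^ j = (n:ℝ) ^ j * ‖ζ‖ ^ (2 * j) := by
            rw [hx, mul_pow, pow_mul]
          have hfj : (Nat.factorial j : ℝ) ≠ 0 := by positivity
          rw [show Real.exp (-(n : ℝ) * ‖ζ‖ ^ 2) = Real.exp (-x) by rw [hx]; ring_nf]
          rw [hxj, div_div_eq_mul_div, pow_succ ((n:ℝ)) j]
          field_simp
  calc ∑ j ∈ range n, ‖ζ‖ ^ (2 * j) * Real.exp (-(n : ℝ) * ‖ζ‖ ^ 2) / cJN j n
      ≤ ∑ j ∈ range n, 2 * (n : ℝ) * (x ^ j / (Nat.factorial j)) * Real.exp (-x) :=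
        Finset.sum_le_sum key
    _ = 2 * (n : ℝ) * Real.exp (-x) * ∑ j ∈ range n, x ^ j / (Nat.factorial j) := by
        rw [Finset.mul_sum]
        apply Finset.sum_congr rfl
        intros; ring
    _ ≤ 2 * (n : ℝ) * Real.exp (-x) * Real.exp x := by
        apply mul_le_mul_of_nonneg_left (Real.sum_le_exp_of_nonneg hx0 n) (by positivity)
    _ = 2 * n := by
        rw [Real.exp_neg]
        field_simp
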